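/- Let X be a Banach space with a bimonotone Schauder basis, and let x = (1/k) Σ_{i=1}^k x_i where x_1 < x_2 < ⋯ < x_k are successive finitely supported vectors with ‖x_i‖ ≤ C for each i. Then for every d ≤ k and every sequence of successive intervals E_1 < E_2 < ⋯ < E_d of ℕ, Σ_{i=1}^d ‖E_i x‖ ≤ C(1 + 2d/k). -/

import Mathlib

/-- Let `N` be a (bimonotone) norm on `c₀₀(ℕ)`, i.e. a seminorm
such that `N (E x) ≤ N x` for every interval `E` of `ℕ`, and let
`x = (1/k) Σ_{i=1}^k x_i` where `x_1 < ⋯ < x_k` are successive finitely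
supported vectors with `N (x_i) ≤ C`.  Then for every `d ≤ k` and every
sequence of successive intervals `E_1 < ⋯ < E_d` of `ℕ`,
`Σ_{i=1}^d N (E_i x) ≤ C (1 + 2 d / k)`. -/
theorem stmt12 (N : Seminorm ℝ (ℕ →₀ ℝ))
    (hbimono : ∀ (y : ℕ →₀ ℝ) (a b : ℕ),
      N (y.filter (· ∈ Finset.Icc a b)) ≤ N y)
    (C : ℝ) (k : ℕ) (hk : 1 ≤ k)
    (xx : Fin k → (ℕ →₀ ℝ))
    (hsucc : ∀ i i' : Fin k, i < i' →
      ∀ a ∈ (xx i).support, ∀ b ∈ (xx i').support, a < b)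
    (hC : ∀ i, N (xx i) ≤ C)
    (x : ℕ →₀ ℝ) (hx : x = ((k : ℝ))⁻¹ • ∑ i, xx i)
    (d : ℕ) (hd : d ≤ k)
    (E : Fin d → Finset ℕ)
    (hE : ∀ i, ∃ a b, E i = Finset.Icc a b)
    (hEsucc : ∀ i i' : Fin d, i < i' → ∀ a ∈ E i, ∀ b ∈ E i', a < b) :
    ∑ i : Fin d, N (x.filter (· ∈ E i)) ≤ C * (1 + 2 * d / k) := by
  classical
  have hk0 : (0:ℝ) < (k:ℝ) := by exact_mod_cast hk
  have hC0 : (0:ℝ) ≤ C := le_trans (apply_nonneg N _) (hC ⟨0, hk⟩)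
  choose a b hab using hE
  -- the set of indices i whose (filtered) vector meets E j
  set M : Fin d → Finset (Fin k) :=
    fun j => Finset.univ.filter (fun i => ((xx i).filter (· ∈ E j)) ≠ 0) with hM
  -- the set of indices i whose support is inside E j
  set I : Fin d → Finset (Fin k) :=
    fun j => Finset.univ.filter
      (fun i => xx i ≠ 0 ∧ (xx i).support ⊆ E j) with hI
  -- Step A : N (E_j x) ≤ |M j| * C / k
  have stepA : ∀ j, N (x.filter (· ∈ E j)) ≤ ((M j).card : ℝ) * C / (k:ℝ) := by
    intro j
    have hfilt : x.filter (· ∈ E j)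
        = ((k:ℝ))⁻¹ • ∑ i, (xx i).filter (· ∈ E j) := by
      rw [hx, Finsupp.filter_smul, Finsupp.filter_sum]
    rw [hfilt]
    rw [map_smul_eq_mul]
    have htri : N (∑ i, (xx i).filter (· ∈ E j))
        ≤ ∑ i, N ((xx i).filter (· ∈ E j)) :=
      Finset.le_sum_of_subadditive N (map_zero N).le (map_add_le_add N) _ _
    have hsum : ∑ i, N ((xx i).filter (· ∈ E j)) ≤ ((M j).card : ℝ) * C := by
      have : ∑ i, N ((xx i).filter (· ∈ E j))
          = ∑ i ∈ M j, N ((xx i).filter (· ∈ E j)) := by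
        refine (Finset.sum_subset (Finset.subset_univ _) ?_).symm
        intro i _ hi
        simp only [hM, Finset.mem_filter, Finset.mem_univ, true_and, not_not] at hi
        rw [hi, map_zero]
      rw [this]
      calc ∑ i ∈ M j, N ((xx i).filter (· ∈ E j)) ≤ ∑ _i ∈ M j, C := by
            refine Finset.sum_le_sum fun i _ => ?_
            calc N ((xx i).filter (· ∈ E j)) ≤ N (xx i) := by
                  rw [hab j]; exact hbimono (xx i) (a j) (b j)
              _ ≤ C := hC i
        _ = ((M j).card : ℝ) * C := by rw [Finset.sum_const, nsmul_eq_mul]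
    rw [norm_inv, Real.norm_natCast]
    rw [div_eq_inv_mul]
    exact mul_le_mul_of_nonneg_left (htri.trans hsum) (by positivity)
  -- Step B : |M j| ≤ |I j| + 2
  have stepB : ∀ j, (M j).card ≤ (I j).card + 2 := by
    intro j
    set D1 : Finset (Fin k) :=
      (M j).filter (fun i => ∃ p ∈ (xx i).support, p < a j) with hD1
    set D2 : Finset (Fin k) :=
      (M j).filter (fun i => ∃ p ∈ (xx i).support, b j < p) with hD2
    -- any i in M j has a support point inside E j
    have hmem : ∀ i ∈ M j, ∃ q ∈ (xx i).support, q ∈ Finset.Icc (a j) (b j) := by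
      intro i hi
      simp only [hM, Finset.mem_filter, Finset.mem_univ, true_and] at hi
      rcases Finsupp.support_nonempty_iff.2 hi with ⟨q, hq⟩
      rw [Finsupp.support_filter, Finset.mem_filter] at hq
      exact ⟨q, hq.1, by rw [← hab j]; exact hq.2⟩
    have hMsub : M j ⊆ I j ∪ D1 ∪ D2 := by
      intro i hi
      by_cases h1 : ∃ p ∈ (xx i).support, p < a j
      · exact Finset.mem_union_left _ (Finset.mem_union_right _
          (Finset.mem_filter.2 ⟨hi, h1⟩))
      by_cases h2 : ∃ p ∈ (xx i).support, b j < p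
      · exact Finset.mem_union_right _ (Finset.mem_filter.2 ⟨hi, h2⟩)
      refine Finset.mem_union_left _ (Finset.mem_union_left _ ?_)
      have hi' := hi
      simp only [hM, Finset.mem_filter, Finset.mem_univ, true_and] at hi'
      refine Finset.mem_filter.2 ⟨Finset.mem_univ _, ?_, ?_⟩
      · intro h0; exact hi' (by rw [h0, Finsupp.filter_zero])
      · intro p hp
        push_neg at h1 h2
        rw [hab j]
        exact Finset.mem_Icc.2 ⟨h1 p hp, h2 p hp⟩
    have hc1 : D1.card ≤ 1 := by
      refine Finset.card_le_one.2 fun i hi i' hi' => ?_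
      by_contra hne
      rcases Ne.lt_or_gt hne with h | h
      all_goals {
        first
        | (rcases (Finset.mem_filter.1 hi').2 with ⟨p, hp, hpa⟩
           rcases hmem i (Finset.mem_filter.1 hi).1 with ⟨q, hq, hqI⟩
           have := hsucc i i' h q hq p hp
           have := (Finset.mem_Icc.1 hqI).1
           omega)
        | (rcases (Finset.mem_filter.1 hi).2 with ⟨p, hp, hpa⟩
           rcases hmem i' (Finset.mem_filter.1 hi').1 with ⟨q, hq, hqI⟩
           have := hsucc i' i h q hq p hp
           have := (Finset.mem_Icc.1 hqI).1
           omega)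
      }
    have hc2 : D2.card ≤ 1 := by
      refine Finset.card_le_one.2 fun i hi i' hi' => ?_
      by_contra hne
      rcases Ne.lt_or_gt hne with h | h
      · rcases (Finset.mem_filter.1 hi).2 with ⟨p, hp, hpb⟩
        rcases hmem i' (Finset.mem_filter.1 hi').1 with ⟨q, hq, hqI⟩
        have := hsucc i i' h p hp q hq
        have := (Finset.mem_Icc.1 hqI).2
        omega
      · rcases (Finset.mem_filter.1 hi').2 with ⟨p, hp, hpb⟩
        rcases hmem i (Finset.mem_filter.1 hi).1 with ⟨q, hq, hqI⟩
        have := hsucc i' i h p hp q hq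
        have := (Finset.mem_Icc.1 hqI).2
        omega
    calc (M j).card ≤ (I j ∪ D1 ∪ D2).card := Finset.card_le_card hMsub
      _ ≤ (I j ∪ D1).card + D2.card := Finset.card_union_le _ _
      _ ≤ (I j).card + D1.card + D2.card := by
          have := Finset.card_union_le (I j) D1; omega
      _ ≤ (I j).card + 2 := by omega
  -- Step C : Σ_j |I j| ≤ k
  have stepC : ∑ j, ((I j).card : ℝ) ≤ (k:ℝ) := by
    have hdisj : ∀ j j' : Fin d, j ≠ j' → Disjoint (I j) (I j') := by
      intro j j' hjj'
      refine Finset.disjoint_left.2 fun i hi hi' => ?_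
      simp only [hI, Finset.mem_filter, Finset.mem_univ, true_and] at hi hi'
      rcases Finsupp.support_nonempty_iff.2 hi.1 with ⟨p, hp⟩
      rcases Ne.lt_or_gt hjj' with h | h
      · exact lt_irrefl p (hEsucc j j' h p (hi.2 hp) p (hi'.2 hp))
      · exact lt_irrefl p (hEsucc j' j h p (hi'.2 hp) p (hi.2 hp))
    have : ∑ j, (I j).card ≤ k := by
      have hcard : ∑ j, (I j).card
          = (Finset.univ.biUnion I).card := by
        rw [Finset.card_biUnion (fun j _ j' _ h => hdisj j j' h)]
      rw [hcard]
      calc (Finset.univ.biUnion I).card ≤ (Finset.univ : Finset (Fin k)).card :=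
            Finset.card_le_card (Finset.subset_univ _)
        _ = k := Finset.card_univ.trans (Fintype.card_fin k)
    calc ∑ j, ((I j).card : ℝ) = ((∑ j, (I j).card : ℕ) : ℝ) := by push_cast; ring
      _ ≤ (k:ℝ) := by exact_mod_cast this
  -- put everything together
  calc ∑ j : Fin d, N (x.filter (· ∈ E j))
      ≤ ∑ j : Fin d, ((M j).card : ℝ) * C / (k:ℝ) :=
        Finset.sum_le_sum fun j _ => stepA j
    _ ≤ ∑ j : Fin d, (((I j).card : ℝ) + 2) * C / (k:ℝ) := by
        refine Finset.sum_le_sum fun j _ => ?_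
        have : ((M j).card : ℝ) ≤ ((I j).card : ℝ) + 2 := by
          exact_mod_cast stepB j
        gcongr
    _ = ((∑ j, ((I j).card : ℝ)) + 2 * d) * C / (k:ℝ) := by
        rw [← Finset.sum_div, ← Finset.sum_mul, Finset.sum_add_distrib,
          Finset.sum_const, Finset.card_univ, Fintype.card_fin, nsmul_eq_mul]
        ring
    _ ≤ ((k:ℝ) + 2 * d) * C / (k:ℝ) := by gcongr
    _ = C * (1 + 2 * d / k) := by field_simp
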